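/- Classification of H¹ solutions of the transformed autonomous ODE (step in the proof of Proposition 1.2). Let w̄ : ℝ → ℝ^m be a C² function belonging to H¹(ℝ, ℝ^m) which satisfies, for all ξ ∈ ℝ, w̄''(ξ) + |w̄(ξ)|^{p−1} w̄(ξ) − (4/(p−1)²) w̄(ξ) = 0, and assume w̄ is not identically zero. Then there exist ξ0 ∈ ℝ and a unit vector Ω ∈ ℝ^m (|Ω| = 1) such that w̄(ξ) = κ0 · cosh(ξ+ξ0)^{−2/(p−1)} · Ω for all ξ ∈ ℝ. -/

import Mathlib

open MeasureTheory Real Set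

/-- `κ₀ = (2(p+1)/(p-1)²)^{1/(p-1)}` -/
noncomputable def kappa0 (p : ℝ) : ℝ := (2 * (p + 1) / (p - 1) ^ 2) ^ (1 / (p - 1))

open Filter
open scoped RealInnerProductSpace


lemma gron_zero_global {F : Type*} [NormedAddCommGroup F] [NormedSpace ℝ F]
    {f f' : ℝ → F} {K : ℝ} (hd : ∀ x, HasDerivAt f (f' x) x)
    (hb : ∀ x, ‖f' x‖ ≤ K * ‖f x‖) {t₀ : ℝ} (h0 : f t₀ = 0) : ∀ x, f x = 0 := by
  have fwd : ∀ (g g' : ℝ → F), (∀ x, HasDerivAt g (g' x) x) → (∀ x, ‖g' x‖ ≤ K * ‖g x‖) →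
      g t₀ = 0 → ∀ x, t₀ ≤ x → g x = 0 := by
    intro g g' hg hgb hg0 x hx
    have h := norm_le_gronwallBound_of_norm_deriv_right_le
      (f := g) (f' := g') (δ := 0) (K := K) (ε := 0) (a := t₀) (b := x)
      (fun t _ => (hg t).continuousAt.continuousWithinAt)
      (fun t _ => (hg t).hasDerivWithinAt)
      (by simp [hg0])
      (fun t _ => by simpa using hgb t)
      x (right_mem_Icc.2 hx)
    rw [gronwallBound_ε0_δ0] at h
    exact norm_le_zero_iff.1 h
  intro x
  rcases le_total t₀ x with hx | hx
  · exact fwd f f' hd hb h0 x hx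
  · have hg : ∀ ξ, HasDerivAt (fun ξ : ℝ => f (2 * t₀ - ξ)) ((-1 : ℝ) • f' (2 * t₀ - ξ)) ξ := by
      intro ξ
      have h1 : HasDerivAt (fun ξ : ℝ => 2 * t₀ - ξ) (-1) ξ := by
        exact (hasDerivAt_id' ξ).const_sub (2 * t₀)
      exact HasDerivAt.scomp ξ (hd (2 * t₀ - ξ)) h1
    have := fwd (fun ξ : ℝ => f (2 * t₀ - ξ)) (fun ξ => (-1 : ℝ) • f' (2 * t₀ - ξ)) hg
      (fun ξ => by simpa using hb (2 * t₀ - ξ))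
      (by simpa [show 2 * t₀ - t₀ = t₀ by ring] using h0) (2 * t₀ - x) (by linarith)
    simpa [show 2 * t₀ - (2 * t₀ - x) = x by ring] using this


lemma rpow_sub_le {q εl M : ℝ} (hq : 0 < q) (hε : 0 < εl) :
    ∀ {s t : ℝ}, s ∈ Icc εl M → t ∈ Icc εl M →
      |s ^ q - t ^ q| ≤ q * max (εl ^ (q - 1)) (M ^ (q - 1)) * |s - t| := by
  have key : ∀ {s t : ℝ}, s ∈ Icc εl M → t ∈ Icc εl M → s ≤ t →
      |s ^ q - t ^ q| ≤ q * max (εl ^ (q - 1)) (M ^ (q - 1)) * |s - t| := by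
    intro s t hs ht hst
    rcases eq_or_lt_of_le hst with rfl | hlt
    · simp
    · have hspos : 0 < s := lt_of_lt_of_le hε hs.1
      have hder : ∀ x ∈ Ioo s t, HasDerivAt (fun x : ℝ => x ^ q) (q * x ^ (q - 1)) x := by
        intro x hx
        exact Real.hasDerivAt_rpow_const (Or.inl (lt_trans hspos hx.1).ne')
      have hcont : ContinuousOn (fun x : ℝ => x ^ q) (Icc s t) := by
        intro x hx
        exact (Real.continuousAt_rpow_const x q
          (Or.inl (lt_of_lt_of_le hspos hx.1).ne')).continuousWithinAt
      obtain ⟨c, hc, hceq⟩ := exists_hasDerivAt_eq_slope (fun x : ℝ => x ^ q)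
        (fun x => q * x ^ (q - 1)) hlt hcont hder
      have hcpos : 0 < c := lt_trans hspos hc.1
      have heq : t ^ q - s ^ q = q * c ^ (q - 1) * (t - s) := by
        rw [eq_div_iff (by linarith : t - s ≠ 0)] at hceq
        linarith [hceq]
      have hcb : c ^ (q - 1) ≤ max (εl ^ (q - 1)) (M ^ (q - 1)) := by
        rcases le_total 1 q with h1 | h1
        · exact le_max_of_le_right
            (Real.rpow_le_rpow hcpos.le (le_trans hc.2.le ht.2) (by linarith))
        · exact le_max_of_le_left
            (Real.rpow_le_rpow_of_nonpos hε (le_trans hs.1 hc.1.le) (by linarith))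
      rw [abs_sub_comm, heq, abs_sub_comm s t,
        abs_of_nonneg (mul_nonneg (mul_nonneg hq.le (Real.rpow_nonneg hcpos.le _))
          (by linarith : (0:ℝ) ≤ t - s)),
        abs_of_nonneg (by linarith : (0:ℝ) ≤ t - s)]
      have : q * c ^ (q - 1) ≤ q * max (εl ^ (q - 1)) (M ^ (q - 1)) :=
        mul_le_mul_of_nonneg_left hcb hq.le
      nlinarith [this, sub_pos.2 hlt]
  intro s t hs ht
  rcases le_total s t with h | h
  · exact key hs ht h
  · have := key ht hs h
    rwa [abs_sub_comm (t^q), abs_sub_comm t s] at this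

-- limit at infinity of integrable nonneg function is zero
lemma limit_zero_atTop {h : ℝ → ℝ} (hi : MeasureTheory.Integrable h)
    (hnn : ∀ x, 0 ≤ h x) {L : ℝ} (hL : Tendsto h atTop (nhds L)) : L = 0 := by
  by_contra hLne
  have hL0 : 0 ≤ L := le_of_tendsto_of_tendsto' tendsto_const_nhds hL (fun x => hnn x)
  have hLpos : 0 < L := lt_of_le_of_ne hL0 (Ne.symm hLne)
  have hev : ∀ᶠ x in atTop, L / 2 ≤ h x :=
    hL.eventually (eventually_ge_nhds (by linarith))
  obtain ⟨A, hA⟩ := hev.exists_forall_of_atTop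
  have hconst : MeasureTheory.Integrable (fun _ : ℝ => L / 2)
      (MeasureTheory.volume.restrict (Ioi A)) := by
    refine MeasureTheory.Integrable.mono' (hi.restrict (s := Ioi A))
      aestronglyMeasurable_const ?_
    filter_upwards [MeasureTheory.ae_restrict_mem measurableSet_Ioi] with x hx
    rw [Real.norm_eq_abs, abs_of_nonneg (by linarith)]
    exact hA x hx.le
  rw [MeasureTheory.integrable_const_iff] at hconst
  rcases hconst with h' | h'
  · linarith
  · have h' := h'.measure_univ_lt_top
    rw [MeasureTheory.Measure.restrict_apply_univ] at h'
    simp [Real.volume_Ioi] at h'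

lemma limit_zero_atBot {h : ℝ → ℝ} (hi : MeasureTheory.Integrable h)
    (hnn : ∀ x, 0 ≤ h x) {L : ℝ} (hL : Tendsto h atBot (nhds L)) : L = 0 := by
  have hcomp : Tendsto (fun x : ℝ => h (-x)) atTop (nhds L) :=
    hL.comp tendsto_neg_atTop_atBot
  exact limit_zero_atTop (hi.comp_neg) (fun x => hnn (-x)) hcomp


lemma forward_unique {F : Type*} [NormedAddCommGroup F] [NormedSpace ℝ F]
    {p a : ℝ} (hp : 1 < p) {w dw ddw v dv ddv : ℝ → F}
    (hw : ∀ ξ, HasDerivAt w (dw ξ) ξ) (hw' : ∀ ξ, HasDerivAt dw (ddw ξ) ξ)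
    (hweq : ∀ ξ, ddw ξ = a • w ξ - ‖w ξ‖ ^ (p-1) • w ξ)
    (hv : ∀ ξ, HasDerivAt v (dv ξ) ξ) (hv' : ∀ ξ, HasDerivAt dv (ddv ξ) ξ)
    (hveq : ∀ ξ, ddv ξ = a • v ξ - ‖v ξ‖ ^ (p-1) • v ξ)
    (hwne : ∀ ξ, w ξ ≠ 0) (hvne : ∀ ξ, v ξ ≠ 0)
    {t₀ : ℝ} (h0 : w t₀ = v t₀) (h0' : dw t₀ = dv t₀)
    (T : ℝ) (hT : t₀ ≤ T) : w T = v T := by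
  have hq : 0 < p - 1 := by linarith
  -- continuity
  have hwc : Continuous (fun ξ => ‖w ξ‖) :=
    continuous_norm.comp (continuous_iff_continuousAt.mpr fun ξ => (hw ξ).continuousAt)
  have hvc : Continuous (fun ξ => ‖v ξ‖) :=
    continuous_norm.comp (continuous_iff_continuousAt.mpr fun ξ => (hv ξ).continuousAt)
  have hne : (Icc t₀ T).Nonempty := nonempty_Icc.2 hT
  obtain ⟨ξm, hξm, hmin⟩ := (isCompact_Icc (a := t₀) (b := T)).exists_isMinOn hne
    (hwc.min hvc).continuousOn
  obtain ⟨ξM, hξM, hmax⟩ := (isCompact_Icc (a := t₀) (b := T)).exists_isMaxOn hne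
    (hwc.max hvc).continuousOn
  set εl : ℝ := min ‖w ξm‖ ‖v ξm‖ with hεldef
  set Mb : ℝ := max ‖w ξM‖ ‖v ξM‖ with hMbdef
  have hεpos : 0 < εl := lt_min (norm_pos_iff.2 (hwne ξm)) (norm_pos_iff.2 (hvne ξm))
  have hwmem : ∀ ξ ∈ Icc t₀ T, ‖w ξ‖ ∈ Icc εl Mb := by
    intro ξ hξ
    exact ⟨le_trans (hmin hξ) (min_le_left _ _),
      le_trans (le_max_left _ _) (hmax hξ)⟩
  have hvmem : ∀ ξ ∈ Icc t₀ T, ‖v ξ‖ ∈ Icc εl Mb := by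
    intro ξ hξ
    exact ⟨le_trans (hmin hξ) (min_le_right _ _),
      le_trans (le_max_right _ _) (hmax hξ)⟩
  set L : ℝ := Mb ^ (p-1) + (p-1) * max (εl ^ (p-2)) (Mb ^ (p-2)) * Mb with hLdef
  have h3 : (0:ℝ) ≤ Mb :=
    le_trans hεpos.le (le_trans (hwmem ξm hξm).1 (hwmem ξm hξm).2)
  have hLnn : 0 ≤ L := by
    have h1 : (0:ℝ) ≤ Mb ^ (p-1) := Real.rpow_nonneg h3 _
    have h2 : (0:ℝ) ≤ εl ^ (p-2) := Real.rpow_nonneg hεpos.le _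
    have h4 : (0:ℝ) ≤ max (εl ^ (p-2)) (Mb ^ (p-2)) := le_trans h2 (le_max_left _ _)
    have h5 := mul_nonneg (mul_nonneg hq.le h4) h3
    rw [hLdef]; linarith
  set K : ℝ := 1 + |a| + L with hKdef
  set f : ℝ → F × F := fun ξ => (w ξ - v ξ, dw ξ - dv ξ) with hfdef
  have hfd : ∀ ξ, HasDerivAt f (dw ξ - dv ξ, ddw ξ - ddv ξ) ξ := fun ξ =>
    ((hw ξ).sub (hv ξ)).prodMk ((hw' ξ).sub (hv' ξ))
  have hbound : ∀ ξ ∈ Ico t₀ T, ‖(dw ξ - dv ξ, ddw ξ - ddv ξ)‖ ≤ K * ‖f ξ‖ + 0 := by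
    intro ξ hξ
    have hξ' : ξ ∈ Icc t₀ T := Ico_subset_Icc_self hξ
    have hf1 : ‖w ξ - v ξ‖ ≤ ‖f ξ‖ := norm_fst_le (f ξ)
    have hf2 : ‖dw ξ - dv ξ‖ ≤ ‖f ξ‖ := norm_snd_le (f ξ)
    have hfnn : 0 ≤ ‖f ξ‖ := norm_nonneg _
    have hglip : ‖‖w ξ‖ ^ (p-1) • w ξ - ‖v ξ‖ ^ (p-1) • v ξ‖ ≤ L * ‖w ξ - v ξ‖ := by
      have hsplit : ‖w ξ‖ ^ (p-1) • w ξ - ‖v ξ‖ ^ (p-1) • v ξ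
          = ‖w ξ‖ ^ (p-1) • (w ξ - v ξ) + (‖w ξ‖ ^ (p-1) - ‖v ξ‖ ^ (p-1)) • v ξ := by
        rw [smul_sub, sub_smul]; abel
      rw [hsplit]
      have h1 : ‖‖w ξ‖ ^ (p-1) • (w ξ - v ξ)‖ ≤ Mb ^ (p-1) * ‖w ξ - v ξ‖ := by
        rw [norm_smul, Real.norm_eq_abs,
          abs_of_nonneg (Real.rpow_nonneg (norm_nonneg _) _)]
        exact mul_le_mul_of_nonneg_right
          (Real.rpow_le_rpow (norm_nonneg _) (hwmem ξ hξ').2 hq.le) (norm_nonneg _)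
      have h2 : ‖(‖w ξ‖ ^ (p-1) - ‖v ξ‖ ^ (p-1)) • v ξ‖
          ≤ ((p-1) * max (εl ^ (p-2)) (Mb ^ (p-2)) * ‖w ξ - v ξ‖) * Mb := by
        rw [norm_smul, Real.norm_eq_abs]
        have habs : |‖w ξ‖ ^ (p-1) - ‖v ξ‖ ^ (p-1)|
            ≤ (p-1) * max (εl ^ (p-2)) (Mb ^ (p-2)) * ‖w ξ - v ξ‖ := by
          have := rpow_sub_le hq hεpos (hwmem ξ hξ') (hvmem ξ hξ')
          have hpp : p - 1 - 1 = p - 2 := by ring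
          rw [hpp] at this
          exact le_trans this (mul_le_mul_of_nonneg_left
            (abs_norm_sub_norm_le (w ξ) (v ξ))
            (by positivity))
        exact mul_le_mul habs (hvmem ξ hξ').2 (norm_nonneg _)
          (by positivity)
      calc ‖‖w ξ‖ ^ (p-1) • (w ξ - v ξ) + (‖w ξ‖ ^ (p-1) - ‖v ξ‖ ^ (p-1)) • v ξ‖
          ≤ ‖‖w ξ‖ ^ (p-1) • (w ξ - v ξ)‖ + ‖(‖w ξ‖ ^ (p-1) - ‖v ξ‖ ^ (p-1)) • v ξ‖ :=
            norm_add_le _ _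
        _ ≤ Mb ^ (p-1) * ‖w ξ - v ξ‖
            + ((p-1) * max (εl ^ (p-2)) (Mb ^ (p-2)) * ‖w ξ - v ξ‖) * Mb :=
            add_le_add h1 h2
        _ = L * ‖w ξ - v ξ‖ := by rw [hLdef]; ring
    have hdd : ‖ddw ξ - ddv ξ‖ ≤ (|a| + L) * ‖w ξ - v ξ‖ := by
      rw [hweq, hveq]
      have : a • w ξ - ‖w ξ‖ ^ (p-1) • w ξ - (a • v ξ - ‖v ξ‖ ^ (p-1) • v ξ)
          = a • (w ξ - v ξ) - (‖w ξ‖ ^ (p-1) • w ξ - ‖v ξ‖ ^ (p-1) • v ξ) := by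
        rw [smul_sub]; abel
      rw [this]
      calc ‖a • (w ξ - v ξ) - (‖w ξ‖ ^ (p-1) • w ξ - ‖v ξ‖ ^ (p-1) • v ξ)‖
          ≤ ‖a • (w ξ - v ξ)‖ + ‖‖w ξ‖ ^ (p-1) • w ξ - ‖v ξ‖ ^ (p-1) • v ξ‖ :=
            norm_sub_le _ _
        _ ≤ |a| * ‖w ξ - v ξ‖ + L * ‖w ξ - v ξ‖ := by
            rw [norm_smul, Real.norm_eq_abs]
            exact add_le_add le_rfl hglip
        _ = (|a| + L) * ‖w ξ - v ξ‖ := by ring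
    rw [add_zero, Prod.norm_def]
    apply max_le
    · calc ‖dw ξ - dv ξ‖ ≤ ‖f ξ‖ := hf2
        _ ≤ K * ‖f ξ‖ := by nlinarith [abs_nonneg a, hLnn]
    · calc ‖ddw ξ - ddv ξ‖ ≤ (|a| + L) * ‖w ξ - v ξ‖ := hdd
        _ ≤ (|a| + L) * ‖f ξ‖ := mul_le_mul_of_nonneg_left hf1 (by positivity)
        _ ≤ K * ‖f ξ‖ := by nlinarith
  have hf0 : ‖f t₀‖ ≤ 0 := by
    simp [hfdef, h0, h0', Prod.norm_def]
  have := norm_le_gronwallBound_of_norm_deriv_right_le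
    (f := f) (f' := fun ξ => (dw ξ - dv ξ, ddw ξ - ddv ξ)) (δ := 0) (K := K) (ε := 0)
    (a := t₀) (b := T)
    (fun t _ => (hfd t).continuousAt.continuousWithinAt)
    (fun t _ => (hfd t).hasDerivWithinAt)
    hf0 hbound T (right_mem_Icc.2 hT)
  rw [gronwallBound_ε0_δ0] at this
  have hfz : f T = 0 := norm_le_zero_iff.1 this
  have := congrArg Prod.fst hfz
  simpa [hfdef, sub_eq_zero] using this



section soliton
variable {p : ℝ} (ξs : ℝ)

noncomputable def phi (p ξs : ℝ) (ξ : ℝ) : ℝ :=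
  kappa0 p * cosh (ξ - ξs) ^ (-(2 / (p - 1)))

noncomputable def dphi (p ξs : ℝ) (ξ : ℝ) : ℝ :=
  kappa0 p * (-(2 / (p - 1))) * (cosh (ξ - ξs) ^ (-(2 / (p - 1)) - 1) * sinh (ξ - ξs))

noncomputable def ddphi (p ξs : ℝ) (ξ : ℝ) : ℝ :=
  kappa0 p * ((2 / (p - 1)) ^ 2 * cosh (ξ - ξs) ^ (-(2 / (p - 1)))
    - (2 / (p - 1)) * (2 / (p - 1) + 1) * cosh (ξ - ξs) ^ (-(2 / (p - 1)) - 2))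

lemma kappa0_pos (hp : 1 < p) : 0 < kappa0 p := by
  have h1 : (0:ℝ) < p - 1 := by linarith
  have h2 : (0:ℝ) < 2 * (p + 1) / (p - 1) ^ 2 := by
    apply div_pos (by linarith) (by positivity)
  exact Real.rpow_pos_of_pos h2 _

lemma kappa0_rpow (hp : 1 < p) : kappa0 p ^ (p - 1) = 2 * (p + 1) / (p - 1) ^ 2 := by
  have hA : (0:ℝ) ≤ 2 * (p + 1) / (p - 1) ^ 2 := by
    apply div_nonneg (by linarith) (by positivity)
  rw [kappa0, ← Real.rpow_mul hA,
    one_div_mul_cancel (by linarith : p - 1 ≠ 0), Real.rpow_one]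

lemma hasDerivAt_cosh_sub (ξ : ℝ) :
    HasDerivAt (fun ξ => cosh (ξ - ξs)) (sinh (ξ - ξs)) ξ := by
  exact ((Real.hasDerivAt_cosh (ξ - ξs)).comp ξ ((hasDerivAt_id' ξ).sub_const ξs)).congr_deriv (mul_one _)

lemma phi_pos (hp : 1 < p) (ξ : ℝ) : 0 < phi p ξs ξ :=
  mul_pos (kappa0_pos hp) (Real.rpow_pos_of_pos (Real.cosh_pos _) _)

lemma hasDerivAt_phi (ξ : ℝ) : HasDerivAt (phi p ξs) (dphi p ξs ξ) ξ := by
  have hc : cosh (ξ - ξs) ≠ 0 := (Real.cosh_pos _).ne'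
  have h1 := (Real.hasDerivAt_rpow_const (x := cosh (ξ - ξs))
    (p := -(2 / (p - 1))) (Or.inl hc)).comp ξ (hasDerivAt_cosh_sub ξs ξ)
  have h2 := h1.const_mul (kappa0 p)
  refine h2.congr_deriv (Eq.symm ?_)
  unfold dphi
  ring

lemma hasDerivAt_dphi (ξ : ℝ) :
    HasDerivAt (dphi p ξs) (ddphi p ξs ξ) ξ := by
  set b : ℝ := 2 / (p - 1) with hb
  have hcpos : (0:ℝ) < cosh (ξ - ξs) := Real.cosh_pos _
  have hc : cosh (ξ - ξs) ≠ 0 := hcpos.ne'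
  have h1 := (Real.hasDerivAt_rpow_const (x := cosh (ξ - ξs))
    (p := -b - 1) (Or.inl hc)).comp ξ (hasDerivAt_cosh_sub ξs ξ)
  have h2 : HasDerivAt (fun ξ => sinh (ξ - ξs)) (cosh (ξ - ξs)) ξ := by
    exact ((Real.hasDerivAt_sinh (ξ - ξs)).comp ξ ((hasDerivAt_id' ξ).sub_const ξs)).congr_deriv (mul_one _)
  have h3 := (h1.mul h2).const_mul (kappa0 p * (-b))
  have hdphi : dphi p ξs = fun ξ => kappa0 p * (-b) *
      (((fun x : ℝ => x ^ (-b - 1)) ∘ fun ξ => cosh (ξ - ξs)) ξ * sinh (ξ - ξs)) := by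
    funext ξ; unfold dphi; rw [← hb]; simp [Function.comp]
  rw [hdphi]
  refine h3.congr_deriv (Eq.symm ?_)
  simp only [Function.comp_apply]
  unfold ddphi
  rw [← hb, show -b - 1 - 1 = -b - 2 by ring]
  have e1 : cosh (ξ - ξs) ^ (-b - 1) * cosh (ξ - ξs) = cosh (ξ - ξs) ^ (-b) := by
    rw [← Real.rpow_add_one hc (-b - 1)]; congr 1; ring
  have e2 : cosh (ξ - ξs) ^ (-b - 2) * cosh (ξ - ξs) ^ 2 = cosh (ξ - ξs) ^ (-b) := by
    rw [← Real.rpow_natCast (cosh (ξ - ξs)) 2, ← Real.rpow_add hcpos]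
    congr 1; push_cast; ring
  have e3 : sinh (ξ - ξs) ^ 2 = cosh (ξ - ξs) ^ 2 - 1 := by
    have := Real.cosh_sq (ξ - ξs); linarith
  linear_combination (-(kappa0 p * b * (b + 1) * cosh (ξ - ξs) ^ (-b - 2))) * e3
    + (-(kappa0 p * b * (b + 1))) * e2 + (kappa0 p * b) * e1

lemma phi_ode (hp : 1 < p) (ξ : ℝ) :
    ddphi p ξs ξ = (4 / (p - 1) ^ 2) * phi p ξs ξ - (phi p ξs ξ) ^ (p - 1) * phi p ξs ξ := by
  set b : ℝ := 2 / (p - 1) with hb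
  have hp1 : (0:ℝ) < p - 1 := by linarith
  have hcpos : (0:ℝ) < cosh (ξ - ξs) := Real.cosh_pos _
  have hκ : (0:ℝ) < kappa0 p := kappa0_pos hp
  have hrw : (phi p ξs ξ) ^ (p - 1) = b * (b + 1) * cosh (ξ - ξs) ^ (-(2:ℝ)) := by
    unfold phi
    rw [Real.mul_rpow hκ.le (Real.rpow_nonneg hcpos.le _),
      ← Real.rpow_mul hcpos.le, kappa0_rpow hp,
      show -(2 / (p - 1)) * (p - 1) = (-2 : ℝ) by field_simp]
    rw [hb]
    congr 1
    field_simp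
    ring
  have e2 : cosh (ξ - ξs) ^ (-(2:ℝ)) * cosh (ξ - ξs) ^ (-b) = cosh (ξ - ξs) ^ (-b - 2) := by
    rw [← Real.rpow_add hcpos]; congr 1; ring
  have ha : (4 : ℝ) / (p - 1) ^ 2 = b ^ 2 := by rw [hb]; field_simp; ring
  rw [hrw, ha]
  unfold phi ddphi
  rw [← hb]
  linear_combination (b * (b + 1) * kappa0 p) * e2

end soliton

set_option maxHeartbeats 1600000 in
/-- **Classification of `H¹` solutions of the transformed autonomous ODE**
(step in the proof of Proposition 1.2).  If `w̄ : ℝ → ℝᵐ` is a nonzero `C²`,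
`H¹` solution of `w̄'' + |w̄|^{p-1} w̄ - 4/(p-1)² w̄ = 0`, then
`w̄(ξ) = κ₀ cosh(ξ+ξ₀)^{-2/(p-1)} Ω` for some `ξ₀ ∈ ℝ` and unit vector `Ω`. -/
theorem ode_classification (p : ℝ) (hp : 1 < p) (m : ℕ) (hm : 2 ≤ m)
    (wb : ℝ → EuclideanSpace ℝ (Fin m))
    (hreg : ContDiff ℝ 2 wb)
    (hL2 : MeasureTheory.Integrable (fun ξ => ‖wb ξ‖ ^ 2))
    (hL2' : MeasureTheory.Integrable (fun ξ => ‖deriv wb ξ‖ ^ 2))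
    (heq : ∀ ξ : ℝ,
      deriv (deriv wb) ξ + ‖wb ξ‖ ^ (p - 1) • wb ξ - (4 / (p - 1) ^ 2) • wb ξ = 0)
    (hne : wb ≠ 0) :
    ∃ (ξ0 : ℝ) (Ω : EuclideanSpace ℝ (Fin m)), ‖Ω‖ = 1 ∧
      ∀ ξ : ℝ, wb ξ = (kappa0 p * Real.cosh (ξ + ξ0) ^ (-(2 / (p - 1)))) • Ω := by
  have hp1 : (0:ℝ) < p - 1 := by linarith
  set a : ℝ := 4 / (p - 1) ^ 2 with hadef
  have hapos : 0 < a := by rw [hadef]; positivity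
  set dw := deriv wb with hdwdef
  set ddw := deriv dw with hddwdef
  -- basic differentiability
  have hdiff1 : Differentiable ℝ wb := hreg.differentiable (by norm_num)
  have hd1 : ∀ ξ, HasDerivAt wb (dw ξ) ξ := fun ξ => (hdiff1 ξ).hasDerivAt
  have hreg1 : ContDiff ℝ 1 dw := by
    have := (contDiff_succ_iff_deriv (n := 1)).mp (by exact_mod_cast hreg)
    exact this.2.2
  have hdiff2 : Differentiable ℝ dw := hreg1.differentiable one_ne_zero
  have hd2 : ∀ ξ, HasDerivAt dw (ddw ξ) ξ := fun ξ => (hdiff2 ξ).hasDerivAt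
  have hcw : Continuous wb := hreg.continuous
  have hcdw : Continuous dw := hdiff2.continuous
  -- the ODE in explicit form
  have ode : ∀ ξ, ddw ξ = a • wb ξ - ‖wb ξ‖ ^ (p - 1) • wb ξ := by
    intro ξ
    have h := heq ξ
    rw [sub_eq_zero] at h
    exact eq_sub_of_add_eq h
  have ode' : ∀ ξ, ddw ξ = (a - ‖wb ξ‖ ^ (p - 1)) • wb ξ := by
    intro ξ; rw [ode ξ, sub_smul]
  -- N = |w|²
  set N : ℝ → ℝ := fun ξ => ⟪wb ξ, wb ξ⟫ with hNdef
  have hNval : ∀ ξ, N ξ = ‖wb ξ‖ ^ 2 := fun ξ => real_inner_self_eq_norm_sq _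
  have hNnn : ∀ ξ, 0 ≤ N ξ := fun ξ => real_inner_self_nonneg
  have hNd : ∀ ξ, HasDerivAt N (2 * ⟪wb ξ, dw ξ⟫) ξ := by
    intro ξ
    have h := HasDerivAt.inner ℝ (hd1 ξ) (hd1 ξ)
    refine h.congr_deriv ?_
    rw [real_inner_comm (dw ξ) (wb ξ)]; ring
  have hNint : Integrable N := by
    have : N = fun ξ => ‖wb ξ‖ ^ 2 := funext hNval
    rw [this]; exact hL2
  have hNcont : Continuous N := hcw.inner hcw
  have hN'int : Integrable (fun ξ => 2 * ⟪wb ξ, dw ξ⟫) := by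
    refine Integrable.mono' (hL2.add hL2') ?_ ?_
    · exact (continuous_const.mul (hcw.inner hcdw)).aestronglyMeasurable
    · refine Filter.Eventually.of_forall (fun ξ => ?_)
      simp only [Pi.add_apply]
      rw [Real.norm_eq_abs, abs_mul, abs_two]
      have h1 := abs_real_inner_le_norm (wb ξ) (dw ξ)
      have h2 := abs_nonneg (⟪wb ξ, dw ξ⟫)
      nlinarith [norm_nonneg (wb ξ), norm_nonneg (dw ξ), sq_nonneg (‖wb ξ‖ - ‖dw ξ‖)]
  -- FTC and limits of N
  have hFTC : ∀ ξ : ℝ, (∫ t in (0:ℝ)..ξ, 2 * ⟪wb t, dw t⟫) = N ξ - N 0 := by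
    intro ξ
    exact intervalIntegral.integral_eq_sub_of_hasDerivAt (fun t _ => hNd t)
      hN'int.intervalIntegrable
  have hNtop : Tendsto N atTop (nhds (N 0 + ∫ t in Ioi (0:ℝ), 2 * ⟪wb t, dw t⟫)) := by
    have h1 := MeasureTheory.intervalIntegral_tendsto_integral_Ioi 0
      hN'int.integrableOn tendsto_id
    refine ((tendsto_const_nhds.add h1)).congr (fun ξ => ?_)
    simp only [id_eq]
    rw [hFTC ξ]; ring
  have hNbot : Tendsto N atBot (nhds (N 0 - ∫ t in Iic (0:ℝ), 2 * ⟪wb t, dw t⟫)) := by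
    have h1 := MeasureTheory.intervalIntegral_tendsto_integral_Iic 0
      hN'int.integrableOn tendsto_id
    refine ((tendsto_const_nhds.sub h1)).congr (fun ξ => ?_)
    have := hFTC ξ
    simp only [id_eq]
    rw [intervalIntegral.integral_symm] at this
    linarith [this]
  have hNtop0 : Tendsto N atTop (nhds 0) := by
    have := limit_zero_atTop hNint hNnn hNtop
    rwa [this] at hNtop
  have hNbot0 : Tendsto N atBot (nhds 0) := by
    have := limit_zero_atBot hNint hNnn hNbot
    rwa [this] at hNbot
  -- a global max point of N
  obtain ⟨ξ₁, hξ₁⟩ := Function.ne_iff.mp hne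
  have hξ₁' : wb ξ₁ ≠ 0 := hξ₁
  have hNξ₁ : 0 < N ξ₁ := by
    rw [hNval]; exact pow_pos (norm_pos_iff.2 hξ₁') 2
  obtain ⟨B, hB⟩ := (hNtop0.eventually (eventually_lt_nhds hNξ₁)).exists_forall_of_atTop
  obtain ⟨A, hA⟩ := (hNbot0.eventually (eventually_lt_nhds hNξ₁)).exists_forall_of_atBot
  set A' : ℝ := min A ξ₁ - 1 with hA'def
  set B' : ℝ := max B ξ₁ + 1 with hB'def
  have hξ₁mem : ξ₁ ∈ Icc A' B' := by
    constructor
    · have := min_le_right A ξ₁; rw [hA'def]; linarith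
    · have := le_max_right B ξ₁; rw [hB'def]; linarith
  obtain ⟨ξs, hξsmem, hmax⟩ := isCompact_Icc.exists_isMaxOn ⟨ξ₁, hξ₁mem⟩
    hNcont.continuousOn
  have hglobal : ∀ ξ, N ξ ≤ N ξs := by
    intro ξ
    by_cases h : ξ ∈ Icc A' B'
    · exact hmax h
    · have h' : ξ < A' ∨ B' < ξ := by
        rcases not_and_or.mp (fun hc => h ⟨hc.1, hc.2⟩) with h' | h'
        · exact Or.inl (lt_of_not_ge h')
        · exact Or.inr (lt_of_not_ge h')
      have hlt : N ξ < N ξ₁ := by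
        rcases h' with h' | h'
        · exact hA ξ (by rw [hA'def] at h'; have := min_le_left A ξ₁; linarith)
        · exact hB ξ (by rw [hB'def] at h'; have := le_max_left B ξ₁; linarith)
      exact le_trans hlt.le (hmax hξ₁mem)
  have hNs_pos : 0 < N ξs := lt_of_lt_of_le hNξ₁ (hmax hξ₁mem)
  have hws_ne : wb ξs ≠ 0 := by
    intro h
    rw [hNdef] at hNs_pos
    simp only [h, inner_zero_left] at hNs_pos
    exact lt_irrefl 0 hNs_pos
  have hlocmax : IsLocalMax N ξs := Filter.Eventually.of_forall hglobal
  have hinner0 : ⟪wb ξs, dw ξs⟫ = 0 := by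
    have := hlocmax.hasDerivAt_eq_zero (hNd ξs)
    linarith
  -- energy
  set P : ℝ → ℝ := fun ξ => ⟪dw ξ, dw ξ⟫ with hPdef
  have hPval : ∀ ξ, P ξ = ‖dw ξ‖ ^ 2 := fun ξ => real_inner_self_eq_norm_sq _
  have hPnn : ∀ ξ, 0 ≤ P ξ := fun ξ => real_inner_self_nonneg
  have hPd : ∀ ξ, HasDerivAt P (2 * ⟪dw ξ, ddw ξ⟫) ξ := by
    intro ξ
    have h := HasDerivAt.inner ℝ (hd2 ξ) (hd2 ξ)
    refine h.congr_deriv ?_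
    rw [real_inner_comm (ddw ξ) (dw ξ)]; ring
  set R : ℝ → ℝ := fun ξ => N ξ ^ ((p + 1) / 2) with hRdef
  have hRnn : ∀ ξ, 0 ≤ R ξ := fun ξ => Real.rpow_nonneg (hNnn ξ) _
  have hRd : ∀ ξ, HasDerivAt R
      (((p + 1) / 2) * N ξ ^ ((p + 1) / 2 - 1) * (2 * ⟪wb ξ, dw ξ⟫)) ξ := by
    intro ξ
    exact (Real.hasDerivAt_rpow_const (x := N ξ) (p := (p + 1) / 2)
      (Or.inr (by linarith))).comp ξ (hNd ξ)
  have hNrpow : ∀ ξ, N ξ ^ ((p + 1) / 2 - 1) = ‖wb ξ‖ ^ (p - 1) := by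
    intro ξ
    rw [hNval ξ, ← Real.rpow_natCast ‖wb ξ‖ 2, ← Real.rpow_mul (norm_nonneg _)]
    congr 1
    push_cast; ring
  set Q : ℝ → ℝ := fun ξ => (1/2) * P ξ + (1/(p+1)) * R ξ - (a/2) * N ξ with hQdef
  have hQd : ∀ ξ, HasDerivAt Q 0 ξ := by
    intro ξ
    have h := (((hPd ξ).const_mul (1/2 : ℝ)).add ((hRd ξ).const_mul (1/(p+1) : ℝ))).sub
      ((hNd ξ).const_mul (a/2 : ℝ))
    refine h.congr_deriv ?_
    have hdd : ⟪dw ξ, ddw ξ⟫ = (a - ‖wb ξ‖ ^ (p - 1)) * ⟪dw ξ, wb ξ⟫ := by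
      rw [ode' ξ, real_inner_smul_right]
    rw [hdd, hNrpow ξ, real_inner_comm (dw ξ) (wb ξ)]
    have hpne : p + 1 ≠ 0 := by linarith
    field_simp
    ring
  have hQconst : ∀ ξ η, Q ξ = Q η := by
    intro ξ η
    exact is_const_of_deriv_eq_zero (fun x => (hQd x).differentiableAt)
      (fun x => (hQd x).deriv) ξ η
  -- energy is zero
  have hRtop0 : Tendsto R atTop (nhds 0) := by
    have hc : ContinuousAt (fun x : ℝ => x ^ ((p + 1) / 2)) 0 :=
      Real.continuousAt_rpow_const 0 _ (Or.inr (by linarith))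
    have := hc.tendsto.comp hNtop0
    rwa [Real.zero_rpow (by positivity : ((p:ℝ) + 1) / 2 ≠ 0)] at this
  have hPeq : ∀ ξ, P ξ = 2 * Q ξ - (2/(p+1)) * R ξ + a * N ξ := by
    intro ξ
    rw [hQdef]
    have hpne : p + 1 ≠ 0 := by linarith
    field_simp
    ring
  have hPtop : Tendsto P atTop (nhds (2 * Q ξs - 0 + 0)) := by
    refine Tendsto.congr (fun ξ => (hPeq ξ).symm) ?_
    refine Tendsto.add ?_ (by simpa using hNtop0.const_mul a)
    refine Tendsto.sub ?_ (by simpa using hRtop0.const_mul (2/(p+1)))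
    exact tendsto_const_nhds.congr (fun ξ => by rw [hQconst ξs ξ])
  have hPint : Integrable P := by
    have : P = fun ξ => ‖dw ξ‖ ^ 2 := funext hPval
    rw [this]; exact hL2'
  have hQ0 : ∀ ξ, Q ξ = 0 := by
    have h := limit_zero_atTop hPint hPnn hPtop
    intro ξ
    rw [hQconst ξ ξs]
    linarith
  -- velocity bound
  have hPle : ∀ ξ, P ξ ≤ a * N ξ := by
    intro ξ
    have h := hQ0 ξ
    rw [hQdef] at h
    have := hRnn ξ
    have hple : 0 < 1/(p+1) := by positivity
    nlinarith
  -- angular momentum: dw ξs = 0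
  have hdws : dw ξs = 0 := by
    set ℓ : ℝ → ℝ := fun ξ => ⟪dw ξs, wb ξ⟫ * ⟪wb ξs, dw ξ⟫
      - ⟪wb ξs, wb ξ⟫ * ⟪dw ξs, dw ξ⟫ with hℓdef
    have hℓd : ∀ ξ, HasDerivAt ℓ 0 ξ := by
      intro ξ
      have h1 : HasDerivAt (fun ξ => ⟪dw ξs, wb ξ⟫) ⟪dw ξs, dw ξ⟫ ξ := by
        have := HasDerivAt.inner ℝ (hasDerivAt_const ξ (dw ξs)) (hd1 ξ)
        simpa using this
      have h2 : HasDerivAt (fun ξ => ⟪wb ξs, dw ξ⟫) ⟪wb ξs, ddw ξ⟫ ξ := by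
        have := HasDerivAt.inner ℝ (hasDerivAt_const ξ (wb ξs)) (hd2 ξ)
        simpa using this
      have h3 : HasDerivAt (fun ξ => ⟪wb ξs, wb ξ⟫) ⟪wb ξs, dw ξ⟫ ξ := by
        have := HasDerivAt.inner ℝ (hasDerivAt_const ξ (wb ξs)) (hd1 ξ)
        simpa using this
      have h4 : HasDerivAt (fun ξ => ⟪dw ξs, dw ξ⟫) ⟪dw ξs, ddw ξ⟫ ξ := by
        have := HasDerivAt.inner ℝ (hasDerivAt_const ξ (dw ξs)) (hd2 ξ)
        simpa using this
      have h := (h1.mul h2).sub (h3.mul h4)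
      refine h.congr_deriv ?_
      have e1 : ⟪wb ξs, ddw ξ⟫ = (a - ‖wb ξ‖ ^ (p - 1)) * ⟪wb ξs, wb ξ⟫ := by
        rw [ode' ξ, real_inner_smul_right]
      have e2 : ⟪dw ξs, ddw ξ⟫ = (a - ‖wb ξ‖ ^ (p - 1)) * ⟪dw ξs, wb ξ⟫ := by
        rw [ode' ξ, real_inner_smul_right]
      rw [e1, e2]
      ring
    have hℓconst : ∀ ξ, ℓ ξ = ℓ ξs :=
      fun ξ => is_const_of_deriv_eq_zero (fun x => (hℓd x).differentiableAt)
        (fun x => (hℓd x).deriv) ξ ξs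
    set Md : ℝ := Real.sqrt (a * N ξs) with hMddef
    have hdwle : ∀ ξ, ‖dw ξ‖ ≤ Md := by
      intro ξ
      rw [hMddef]
      have h1 : ‖dw ξ‖ ^ 2 ≤ a * N ξs := by
        rw [← hPval ξ]
        exact le_trans (hPle ξ) (by nlinarith [hglobal ξ, hapos.le])
      calc ‖dw ξ‖ = Real.sqrt (‖dw ξ‖ ^ 2) := by rw [Real.sqrt_sq (norm_nonneg _)]
        _ ≤ Real.sqrt (a * N ξs) := Real.sqrt_le_sqrt h1
    set C : ℝ := 2 * ‖dw ξs‖ * ‖wb ξs‖ * Md with hCdef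
    have hℓbd : ∀ ξ, |ℓ ξ| ≤ C * ‖wb ξ‖ := by
      intro ξ
      rw [hℓdef]
      have b1 := abs_real_inner_le_norm (dw ξs) (wb ξ)
      have b2 := abs_real_inner_le_norm (wb ξs) (dw ξ)
      have b3 := abs_real_inner_le_norm (wb ξs) (wb ξ)
      have b4 := abs_real_inner_le_norm (dw ξs) (dw ξ)
      have hd := hdwle ξ
      have c1 : |⟪dw ξs, wb ξ⟫| * |⟪wb ξs, dw ξ⟫|
          ≤ (‖dw ξs‖ * ‖wb ξ‖) * (‖wb ξs‖ * Md) := by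
        refine mul_le_mul b1 ?_ (abs_nonneg _) (by positivity)
        exact le_trans b2 (mul_le_mul_of_nonneg_left hd (norm_nonneg _))
      have c2 : |⟪wb ξs, wb ξ⟫| * |⟪dw ξs, dw ξ⟫|
          ≤ (‖wb ξs‖ * ‖wb ξ‖) * (‖dw ξs‖ * Md) := by
        refine mul_le_mul b3 ?_ (abs_nonneg _) (by positivity)
        exact le_trans b4 (mul_le_mul_of_nonneg_left hd (norm_nonneg _))
      calc |⟪dw ξs, wb ξ⟫ * ⟪wb ξs, dw ξ⟫ - ⟪wb ξs, wb ξ⟫ * ⟪dw ξs, dw ξ⟫|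
          ≤ |⟪dw ξs, wb ξ⟫ * ⟪wb ξs, dw ξ⟫| + |⟪wb ξs, wb ξ⟫ * ⟪dw ξs, dw ξ⟫| :=
            abs_sub _ _
        _ = |⟪dw ξs, wb ξ⟫| * |⟪wb ξs, dw ξ⟫| + |⟪wb ξs, wb ξ⟫| * |⟪dw ξs, dw ξ⟫| := by
            rw [abs_mul, abs_mul]
        _ ≤ (‖dw ξs‖ * ‖wb ξ‖) * (‖wb ξs‖ * Md) + (‖wb ξs‖ * ‖wb ξ‖) * (‖dw ξs‖ * Md) :=
            add_le_add c1 c2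
        _ = C * ‖wb ξ‖ := by rw [hCdef]; ring
    have hwtop0 : Tendsto (fun ξ => ‖wb ξ‖) atTop (nhds 0) := by
      have := (Real.continuous_sqrt.tendsto 0).comp hNtop0
      rw [Real.sqrt_zero] at this
      refine this.congr (fun ξ => ?_)
      simp only [Function.comp_apply]
      rw [hNval ξ, Real.sqrt_sq (norm_nonneg _)]
    have hℓtop : Tendsto ℓ atTop (nhds 0) := by
      rw [tendsto_zero_iff_abs_tendsto_zero]
      refine squeeze_zero (fun ξ => abs_nonneg _) hℓbd ?_
      simpa using hwtop0.const_mul C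
    have hℓs0 : ℓ ξs = 0 := by
      have h1 : Tendsto ℓ atTop (nhds (ℓ ξs)) :=
        tendsto_const_nhds.congr (fun ξ => (hℓconst ξ).symm)
      exact tendsto_nhds_unique h1 hℓtop
    have hbeta : ℓ ξs = ⟪dw ξs, wb ξs⟫ * ⟪wb ξs, dw ξs⟫
        - ⟪wb ξs, wb ξs⟫ * ⟪dw ξs, dw ξs⟫ := by rw [hℓdef]
    have hcm : ⟪dw ξs, wb ξs⟫ = (0:ℝ) := by rw [real_inner_comm]; exact hinner0
    have h4 : ⟪wb ξs, wb ξs⟫ * ⟪dw ξs, dw ξs⟫ = 0 := by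
      rw [hbeta, hcm, hinner0] at hℓs0
      linarith
    have hNs' : (0:ℝ) < ⟪wb ξs, wb ξs⟫ := hNs_pos
    rcases mul_eq_zero.mp h4 with h | h
    · exact absurd h hNs'.ne'
    · exact inner_self_eq_zero.mp h
  -- energy at the max point: the norm there is kappa0
  have hPs : P ξs = 0 := by
    show ⟪dw ξs, dw ξs⟫ = 0
    rw [hdws]; simp
  have hpne : (p:ℝ) + 1 ≠ 0 := by linarith
  have hRs2 : 2 * R ξs = a * (p + 1) * N ξs := by
    have h := hQ0 ξs
    rw [hQdef] at h
    simp only at h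
    rw [hPs] at h
    field_simp at h
    linarith
  have hRsval : R ξs = N ξs ^ ((p-1)/2) * N ξs := by
    show N ξs ^ ((p+1)/2) = N ξs ^ ((p-1)/2) * N ξs
    rw [← Real.rpow_add_one hNs_pos.ne' ((p-1)/2)]
    congr 1; ring
  have hXval : N ξs ^ ((p-1)/2) = a * (p+1) / 2 := by
    have h3 : N ξs ^ ((p-1)/2) * N ξs = (a * (p+1) / 2) * N ξs := by
      rw [hRsval] at hRs2; linarith
    exact mul_right_cancel₀ hNs_pos.ne' h3
  have hXA : N ξs ^ ((p-1)/2) = 2 * (p + 1) / (p - 1) ^ 2 := by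
    rw [hXval, hadef]
    field_simp
    ring
  have hAnn : (0:ℝ) ≤ 2 * (p + 1) / (p - 1) ^ 2 := by
    apply div_nonneg (by linarith) (by positivity)
  have hNκ : N ξs = kappa0 p ^ (2:ℕ) := by
    have h1 : N ξs = (N ξs ^ ((p-1)/2)) ^ (2/(p-1)) := by
      rw [← Real.rpow_mul (hNnn ξs),
        show (p-1)/2 * (2/(p-1)) = 1 by field_simp, Real.rpow_one]
    have h2 : kappa0 p ^ (2:ℕ) = (2 * (p + 1) / (p - 1) ^ 2) ^ ((2:ℝ)/(p-1)) := by
      rw [← Real.rpow_natCast (kappa0 p) 2, kappa0, ← Real.rpow_mul hAnn]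
      congr 1
      push_cast
      field_simp
    rw [h1, hXA, h2]
  have hκpos : 0 < kappa0 p := kappa0_pos hp
  have hwsnorm : ‖wb ξs‖ = kappa0 p := by
    have h1 : ‖wb ξs‖ ^ 2 = kappa0 p ^ 2 := by rw [← hNval]; exact hNκ
    calc ‖wb ξs‖ = Real.sqrt (‖wb ξs‖ ^ 2) := (Real.sqrt_sq (norm_nonneg _)).symm
      _ = Real.sqrt (kappa0 p ^ 2) := by rw [h1]
      _ = kappa0 p := Real.sqrt_sq hκpos.le
  have hbound : ∀ ξ, ‖wb ξ‖ ≤ kappa0 p := by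
    intro ξ
    have h := hglobal ξ
    rw [hNval, hNval] at h
    calc ‖wb ξ‖ = Real.sqrt (‖wb ξ‖ ^ 2) := (Real.sqrt_sq (norm_nonneg _)).symm
      _ ≤ Real.sqrt (‖wb ξs‖ ^ 2) := Real.sqrt_le_sqrt h
      _ = ‖wb ξs‖ := Real.sqrt_sq (norm_nonneg _)
      _ = kappa0 p := hwsnorm
  have hsle : ∀ ξ, ‖wb ξ‖ ^ (p-1) ≤ kappa0 p ^ (p-1) :=
    fun ξ => Real.rpow_le_rpow (norm_nonneg _) (hbound ξ) (by linarith)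
  have hsnn : ∀ ξ, (0:ℝ) ≤ ‖wb ξ‖ ^ (p-1) := fun ξ => Real.rpow_nonneg (norm_nonneg _) _
  -- the solution never vanishes
  have hnz : ∀ ξ, wb ξ ≠ 0 := by
    intro ξ₂ h0
    have hN2 : N ξ₂ = 0 := by show ⟪wb ξ₂, wb ξ₂⟫ = 0; rw [h0]; simp
    have hR2 : R ξ₂ = 0 := by
      show N ξ₂ ^ ((p+1)/2) = 0
      rw [hN2]
      exact Real.zero_rpow (by positivity)
    have hP2 : P ξ₂ = 0 := by
      have h := hQ0 ξ₂
      rw [hQdef] at h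
      simp only at h
      rw [hR2, hN2] at h
      linarith
    have hdw2 : dw ξ₂ = 0 := by
      have : ⟪dw ξ₂, dw ξ₂⟫ = 0 := hP2
      exact inner_self_eq_zero.mp this
    set K : ℝ := 1 + a + kappa0 p ^ (p-1) with hKdef
    have hκnn : (0:ℝ) ≤ kappa0 p ^ (p-1) := Real.rpow_nonneg hκpos.le _
    set Fp : ℝ → EuclideanSpace ℝ (Fin m) × EuclideanSpace ℝ (Fin m) :=
      fun ξ => (wb ξ, dw ξ) with hFpdef
    set Fp' : ℝ → EuclideanSpace ℝ (Fin m) × EuclideanSpace ℝ (Fin m) :=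
      fun ξ => (dw ξ, ddw ξ) with hFp'def
    have hgb : ∀ ξ, ‖Fp' ξ‖ ≤ K * ‖Fp ξ‖ := by
      intro ξ
      have hK1 : 1 ≤ K := by rw [hKdef]; linarith [hapos.le, hκnn]
      have hKnn : (0:ℝ) ≤ K := by linarith
      have n1 : ‖wb ξ‖ ≤ ‖Fp ξ‖ := norm_fst_le (Fp ξ)
      have n2 : ‖dw ξ‖ ≤ ‖Fp ξ‖ := norm_snd_le (Fp ξ)
      have hfnn : (0:ℝ) ≤ ‖Fp ξ‖ := norm_nonneg _
      have hnorm : ‖Fp' ξ‖ = max ‖dw ξ‖ ‖ddw ξ‖ := Prod.norm_def (Fp' ξ)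
      rw [hnorm]
      apply max_le
      · calc ‖dw ξ‖ ≤ ‖Fp ξ‖ := n2
          _ ≤ K * ‖Fp ξ‖ := by nlinarith
      · have hdd : ‖ddw ξ‖ ≤ (a + kappa0 p ^ (p-1)) * ‖wb ξ‖ := by
          rw [ode' ξ, norm_smul, Real.norm_eq_abs]
          have habs : |a - ‖wb ξ‖ ^ (p-1)| ≤ a + kappa0 p ^ (p-1) :=
            abs_le.mpr ⟨by linarith [hsle ξ, hsnn ξ], by linarith [hsle ξ, hsnn ξ]⟩
          exact mul_le_mul_of_nonneg_right habs (norm_nonneg _)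
        calc ‖ddw ξ‖ ≤ (a + kappa0 p ^ (p-1)) * ‖wb ξ‖ := hdd
          _ ≤ (a + kappa0 p ^ (p-1)) * ‖Fp ξ‖ :=
            mul_le_mul_of_nonneg_left n1 (by linarith [hapos.le])
          _ ≤ K * ‖Fp ξ‖ := by
            apply mul_le_mul_of_nonneg_right _ hfnn
            rw [hKdef]; linarith
    have hFpd : ∀ ξ, HasDerivAt Fp (Fp' ξ) ξ := fun ξ => (hd1 ξ).prodMk (hd2 ξ)
    have hFp0 : Fp ξ₂ = 0 := by
      show (wb ξ₂, dw ξ₂) = 0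
      rw [h0, hdw2]
      rfl
    have hall := gron_zero_global hFpd hgb hFp0
    have := congrArg Prod.fst (hall ξ₁)
    exact hξ₁' this
  -- the unit direction
  set Ωv : EuclideanSpace ℝ (Fin m) := (kappa0 p)⁻¹ • wb ξs with hΩdef
  have hΩnorm : ‖Ωv‖ = 1 := by
    rw [hΩdef, norm_smul, Real.norm_eq_abs, abs_inv, abs_of_pos hκpos, hwsnorm]
    field_simp
  refine ⟨-ξs, Ωv, hΩnorm, ?_⟩
  -- the soliton comparison solution
  set S : ℝ → EuclideanSpace ℝ (Fin m) := fun ξ => phi p ξs ξ • Ωv with hSdef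
  set dS : ℝ → EuclideanSpace ℝ (Fin m) := fun ξ => dphi p ξs ξ • Ωv with hdSdef
  set ddS : ℝ → EuclideanSpace ℝ (Fin m) := fun ξ => ddphi p ξs ξ • Ωv with hddSdef
  have hSd : ∀ ξ, HasDerivAt S (dS ξ) ξ := fun ξ => (hasDerivAt_phi ξs ξ).smul_const Ωv
  have hSd2 : ∀ ξ, HasDerivAt dS (ddS ξ) ξ := fun ξ => (hasDerivAt_dphi ξs ξ).smul_const Ωv
  have hSnorm : ∀ ξ, ‖S ξ‖ = phi p ξs ξ := by
    intro ξ
    show ‖phi p ξs ξ • Ωv‖ = phi p ξs ξ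
    rw [norm_smul, hΩnorm, Real.norm_eq_abs, abs_of_pos (phi_pos ξs hp ξ), mul_one]
  have hSode : ∀ ξ, ddS ξ = a • S ξ - ‖S ξ‖ ^ (p-1) • S ξ := by
    intro ξ
    rw [hSnorm ξ]
    show ddphi p ξs ξ • Ωv
      = a • (phi p ξs ξ • Ωv) - phi p ξs ξ ^ (p-1) • (phi p ξs ξ • Ωv)
    rw [show ddphi p ξs ξ = a * phi p ξs ξ - phi p ξs ξ ^ (p-1) * phi p ξs ξ from by
      rw [hadef]; exact phi_ode ξs hp ξ]
    module
  have hΩne : Ωv ≠ 0 := by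
    intro h; rw [h] at hΩnorm; simp at hΩnorm
  have hSne : ∀ ξ, S ξ ≠ 0 := fun ξ => smul_ne_zero (phi_pos ξs hp ξ).ne' hΩne
  have hphis : phi p ξs ξs = kappa0 p := by
    unfold phi
    rw [sub_self, Real.cosh_zero, Real.one_rpow, mul_one]
  have hS0 : wb ξs = S ξs := by
    show wb ξs = phi p ξs ξs • Ωv
    rw [hphis, hΩdef, smul_smul, mul_inv_cancel₀ hκpos.ne', one_smul]
  have hdphis : dphi p ξs ξs = 0 := by
    unfold dphi
    rw [sub_self, Real.sinh_zero]
    ring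
  have hdS0 : dw ξs = dS ξs := by
    show dw ξs = dphi p ξs ξs • Ωv
    rw [hdphis, hdws, zero_smul]
  -- forward uniqueness
  have hfwd : ∀ T, ξs ≤ T → wb T = S T := fun T hT =>
    forward_unique hp hd1 hd2 ode hSd hSd2 hSode hnz hSne hS0 hdS0 T hT
  -- backward via reflection
  have hrd : ∀ ξ : ℝ, HasDerivAt (fun ξ : ℝ => 2*ξs - ξ) (-1) ξ := fun ξ => by
    exact (hasDerivAt_id' ξ).const_sub (2*ξs)
  have hw1 : ∀ ξ, HasDerivAt (fun ξ => wb (2*ξs - ξ)) ((-1:ℝ) • dw (2*ξs - ξ)) ξ :=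
    fun ξ => HasDerivAt.scomp ξ (hd1 _) (hrd ξ)
  have hw2 : ∀ ξ, HasDerivAt (fun ξ => (-1:ℝ) • dw (2*ξs - ξ)) (ddw (2*ξs - ξ)) ξ := by
    intro ξ
    have := (HasDerivAt.scomp ξ (hd2 (2*ξs - ξ)) (hrd ξ)).const_smul (-1:ℝ)
    exact this.congr_deriv (by rw [smul_smul]; norm_num)
  have hv1 : ∀ ξ, HasDerivAt (fun ξ => S (2*ξs - ξ)) ((-1:ℝ) • dS (2*ξs - ξ)) ξ :=
    fun ξ => HasDerivAt.scomp ξ (hSd _) (hrd ξ)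
  have hv2 : ∀ ξ, HasDerivAt (fun ξ => (-1:ℝ) • dS (2*ξs - ξ)) (ddS (2*ξs - ξ)) ξ := by
    intro ξ
    have := (HasDerivAt.scomp ξ (hSd2 (2*ξs - ξ)) (hrd ξ)).const_smul (-1:ℝ)
    exact this.congr_deriv (by rw [smul_smul]; norm_num)
  have hbwd : ∀ T, ξs ≤ T → wb (2*ξs - T) = S (2*ξs - T) := by
    intro T hT
    refine forward_unique hp hw1 hw2 (fun ξ => ode (2*ξs - ξ)) hv1 hv2
      (fun ξ => hSode (2*ξs - ξ)) (fun ξ => hnz _) (fun ξ => hSne _)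
      (t₀ := ξs) ?_ ?_ T hT
    · rw [show 2*ξs - ξs = ξs by ring]; exact hS0
    · rw [show 2*ξs - ξs = ξs by ring, hdS0]
  -- conclusion
  intro ξ
  have key : wb ξ = S ξ := by
    rcases le_total ξs ξ with h | h
    · exact hfwd ξ h
    · have := hbwd (2*ξs - ξ) (by linarith)
      rwa [show 2*ξs - (2*ξs - ξ) = ξ by ring] at this
  rw [key]
  show phi p ξs ξ • Ωv = _
  unfold phi
  rw [sub_eq_add_neg]
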